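/- Let n ≥ 2, a > 0, and let g be the n-dimensional solvable real Lie algebra with basis e₁,…,eₙ and brackets [e_i,e_j] = 0 for 1 ≤ i,j ≤ n−1 and [eₙ,e_i] = a·e_i for 1 ≤ i ≤ n−1; let α be the inner product on g making e₁,…,eₙ orthonormal and set X = c·eₙ for a real number c. Then for all u,y ∈ g one has a·(α(y,y)·α(X,u) − α(X,y)·α(u,y)) = −c·α([y,u],y). In particular, α([y,u],y)·(α(y,y)·α(X,v) − α(X,y)·α(v,y)) = α([y,v],y)·(α(y,y)·α(X,u) − α(X,y)·α(u,y)) for all u,v,y ∈ g. -/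

import Mathlib

noncomputable section

/-- The inner product making the basis `e` orthonormal. -/
def basisInner {V : Type*} [AddCommGroup V] [Module ℝ V] {ι : Type*} [Fintype ι]
    (e : Module.Basis ι ℝ V) (x y : V) : ℝ :=
  ∑ k, e.repr x k * e.repr y k

section Aux

variable {g : Type*} [LieRing g] [LieAlgebra ℝ g] {n : ℕ} (e : Module.Basis (Fin n) ℝ g)

lemma basisInner_smul_left (r : ℝ) (x y : g) :
    basisInner e (r • x) y = r * basisInner e x y := by
  simp [basisInner, Finset.mul_sum, mul_assoc]

lemma basisInner_sub_left (x z y : g) :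
    basisInner e (x - z) y = basisInner e x y - basisInner e z y := by
  simp [basisInner, sub_mul, Finset.sum_sub_distrib]

lemma basisInner_basis_left (i : Fin n) (y : g) :
    basisInner e (e i) y = e.repr y i := by
  simp only [basisInner, Module.Basis.repr_self, Finsupp.single_apply]
  rw [Finset.sum_eq_single i] <;> simp +contextual [eq_comm]

lemma bracket_eq (a : ℝ) (ℓ : Fin n)
    (hbr1 : ∀ i j : Fin n, i ≠ ℓ → j ≠ ℓ → ⁅e i, e j⁆ = 0)
    (hbr2 : ∀ i : Fin n, i ≠ ℓ → ⁅e ℓ, e i⁆ = a • e i)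
    (y u : g) : ⁅y, u⁆ = (a * e.repr y ℓ) • u - (a * e.repr u ℓ) • y := by
  let φ : g →ₗ[ℝ] ℝ := a • (e.coord ℓ)
  let F : g →ₗ[ℝ] g →ₗ[ℝ] g := LinearMap.mk₂ ℝ (fun y u => ⁅y, u⁆)
    add_lie (fun r y u => smul_lie r y u) lie_add (fun r y u => lie_smul r y u)
  let G : g →ₗ[ℝ] g →ₗ[ℝ] g := LinearMap.mk₂ ℝ (fun y u => φ y • u - φ u • y)
    (by intro m₁ m₂ u; simp [add_smul, smul_add] <;> abel)
    (by intro r m u; simp [smul_smul, smul_sub, mul_comm] <;> abel)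
    (by intro m u₁ u₂; simp [add_smul, smul_add] <;> abel)
    (by intro r m u; simp [smul_smul, smul_sub, mul_comm] <;> abel)
  have hFG : F = G := by
    apply e.ext; intro i
    apply e.ext; intro j
    show ⁅e i, e j⁆ = φ (e i) • e j - φ (e j) • e i
    have hφ : ∀ k : Fin n, φ (e k) = if k = ℓ then a else 0 := by
      intro k
      by_cases hk : k = ℓ
      · subst hk; simp [φ]
      · simp [φ, Module.Basis.coord_apply, Finsupp.single_apply, hk, Ne.symm hk]
    by_cases hi : i = ℓ <;> by_cases hj : j = ℓ
    · subst hi; subst hj; simp [hφ]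
    · subst hi; simp [hbr2 j hj, hφ, hj]
    · have hskew : ⁅e i, e ℓ⁆ = -(a • e i) := by
        rw [← lie_skew, hbr2 i hi]
      rw [hj, hskew, hφ, hφ]
      simp [hi]
    · simp [hbr1 i j hi hj, hφ, hi, hj]
  have := congrFun (congrArg (fun h => fun y u => h y u) hFG) y
  have h2 := congrFun this u
  simpa [F, G, φ, Module.Basis.coord_apply, mul_comm] using h2

end Aux

/-- In the solvable Lie algebra with `[e_i,e_j] = 0` (`i,j ≤ n−1`),
`[eₙ,e_i] = a·e_i`, orthonormalizing inner product `α` and `X = c·eₙ`, one has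
`a·(α(y,y)α(X,u) − α(X,y)α(u,y)) = −c·α([y,u],y)`, and in particular the identity of
Theorem 1.4 (`Ψ ≡ 0`) holds. -/
theorem solvable_example_Psi_identity
    {g : Type*} [LieRing g] [LieAlgebra ℝ g]
    (n : ℕ) (hn : 2 ≤ n) (a : ℝ) (ha : 0 < a)
    (e : Module.Basis (Fin n) ℝ g)
    (ℓ : Fin n) (hℓ : (ℓ : ℕ) = n - 1)
    (hbr1 : ∀ i j : Fin n, i ≠ ℓ → j ≠ ℓ → ⁅e i, e j⁆ = 0)
    (hbr2 : ∀ i : Fin n, i ≠ ℓ → ⁅e ℓ, e i⁆ = a • e i)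
    (c : ℝ) :
    (∀ u y : g,
        a * (basisInner e y y * basisInner e (c • e ℓ) u
            - basisInner e (c • e ℓ) y * basisInner e u y)
          = -c * basisInner e ⁅y, u⁆ y)
      ∧ (∀ u v y : g,
          basisInner e ⁅y, u⁆ y
              * (basisInner e y y * basisInner e (c • e ℓ) v
                  - basisInner e (c • e ℓ) y * basisInner e v y)
            = basisInner e ⁅y, v⁆ y
              * (basisInner e y y * basisInner e (c • e ℓ) u
                  - basisInner e (c • e ℓ) y * basisInner e u y)) := by
  have key : ∀ u y : g,
      a * (basisInner e y y * basisInner e (c • e ℓ) u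
          - basisInner e (c • e ℓ) y * basisInner e u y)
        = -c * basisInner e ⁅y, u⁆ y := by
    intro u y
    rw [bracket_eq e a ℓ hbr1 hbr2 y u]
    simp only [basisInner_sub_left, basisInner_smul_left, basisInner_basis_left]
    ring
  refine ⟨key, fun u v y => ?_⟩
  have h1 := key u y
  have h2 := key v y
  apply mul_left_cancel₀ ha.ne'
  calc a * (basisInner e ⁅y, u⁆ y * (basisInner e y y * basisInner e (c • e ℓ) v
        - basisInner e (c • e ℓ) y * basisInner e v y))
      = basisInner e ⁅y, u⁆ y * (a * (basisInner e y y * basisInner e (c • e ℓ) v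
        - basisInner e (c • e ℓ) y * basisInner e v y)) := by ring
    _ = basisInner e ⁅y, u⁆ y * (-c * basisInner e ⁅y, v⁆ y) := by rw [h2]
    _ = basisInner e ⁅y, v⁆ y * (-c * basisInner e ⁅y, u⁆ y) := by ring
    _ = basisInner e ⁅y, v⁆ y * (a * (basisInner e y y * basisInner e (c • e ℓ) u
        - basisInner e (c • e ℓ) y * basisInner e u y)) := by rw [h1]
    _ = a * (basisInner e ⁅y, v⁆ y * (basisInner e y y * basisInner e (c • e ℓ) u
        - basisInner e (c • e ℓ) y * basisInner e u y)) := by ring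

end
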